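/- For every integer n ≥ 2, the Muller condition F_n = {A ⊆ {1,…,n} : |A| > 1} over the set of colours Γ_n = {1,…,n} satisfies mem_gen^ε-free(F_n) = 2 and mem_gen(F_n) = n. In particular, every ε-free F_n-game won by Eve admits a winning strategy set by a memory structure of size 2, while there is an F_n-game (with ε-transitions) won by Eve in which every memory structure setting a winning strategy has at least n states. -/

import Mathlib

/-- The set of letters occurring infinitely often in the infinite word `w`. -/
def InfOcc {α : Type} (w : ℕ → α) : Set α :=
  {a | ∀ n, ∃ m, n ≤ m ∧ w m = a}

/-- A deterministic transition-based automaton over input alphabet `σ`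
with output alphabet `Γ` and set of states `Q`. -/
structure DetAut (σ Γ Q : Type) where
  init : Q
  δ : Q → σ → Q × Γ

namespace DetAut

variable {σ Γ Q : Type}

/-- The sequence of states of the run of `A` over `w`. -/
def run (A : DetAut σ Γ Q) (w : ℕ → σ) : ℕ → Q
  | 0 => A.init
  | n + 1 => (A.δ (run A w n) (w n)).1

/-- The output word produced by `A` reading `w`. -/
def output (A : DetAut σ Γ Q) (w : ℕ → σ) (n : ℕ) : Γ :=
  (A.δ (A.run w n) (w n)).2

end DetAut

/-- `u` satisfies the Rabin condition given by the pairs in `R`. -/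
def RabinAccept {Γ : Type} (R : List (Set Γ × Set Γ)) (u : ℕ → Γ) : Prop :=
  ∃ p ∈ R, (InfOcc u ∩ p.1).Nonempty ∧ InfOcc u ∩ p.2 = ∅

/-- `u` satisfies the Streett condition given by the pairs in `R`. -/
def StreettAccept {Γ : Type} (R : List (Set Γ × Set Γ)) (u : ℕ → Γ) : Prop :=
  ∀ p ∈ R, (InfOcc u ∩ p.1).Nonempty → (InfOcc u ∩ p.2).Nonempty

/-- The language accepted by the automaton `A` with Rabin condition `R`. -/
def RabinLang {σ Γ Q : Type} (A : DetAut σ Γ Q) (R : List (Set Γ × Set Γ)) :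
    Set (ℕ → σ) :=
  {w | RabinAccept R (A.output w)}

/-- The Muller language associated to the Muller condition `F`. -/
def LF {Γ : Type} (F : Set (Set Γ)) : Set (ℕ → Γ) :=
  {w | InfOcc w ∈ F}

/-- A (transition-coloured) game arena with colours in `Γ`: a finite directed
graph with a partition of the vertices between Eve (`EveV`) and Adam, an
initial vertex, and a colouring of the edges by `Γ ∪ {ε}` (`ε = none`), such
that every vertex has an outgoing edge and no cycle is labelled exclusively
by `ε`. -/
structure Game (Γ : Type) where
  V : Type
  [finV : Fintype V]
  EveV : Set V
  edge : V → V → Prop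
  v0 : V
  col : V → V → Option Γ
  exists_succ : ∀ v, ∃ u, edge v u
  no_eps_cycle : ¬ ∃ (v : V) (l : List V),
      List.Chain (fun a b => edge a b ∧ col a b = none) v (l ++ [v])

attribute [instance] Game.finV

namespace Game

variable {Γ : Type}

/-- `ρ` is a play of `G`: an infinite path from the initial vertex. -/
def IsPlay (G : Game Γ) (ρ : ℕ → G.V) : Prop :=
  ρ 0 = G.v0 ∧ ∀ n, G.edge (ρ n) (ρ (n + 1))

/-- The set of colours of `Γ` produced infinitely often by the play `ρ`; this
is the set of letters occurring infinitely often in the output of `ρ` (the word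
obtained from the labels of its edges after deleting the occurrences of `ε`). -/
def InfCol (G : Game Γ) (ρ : ℕ → G.V) : Set Γ :=
  {a | ∀ n, ∃ m, n ≤ m ∧ G.col (ρ m) (ρ (m + 1)) = some a}

/-- The history of the play `ρ` before it reaches position `n`. -/
def hist (G : Game Γ) (ρ : ℕ → G.V) (n : ℕ) : List G.V :=
  List.ofFn (fun i : Fin n => ρ i.1)

/-- Eve wins the game `G` with the Muller winning condition `F`: she has a
strategy (a choice of an outgoing edge after each finite play ending in one of
her vertices) such that every play adhering to it is winning for her. -/
def WinsEve (G : Game Γ) (F : Set (Set Γ)) : Prop :=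
  ∃ str : List G.V → G.V → G.V,
    (∀ h v, v ∈ G.EveV → G.edge v (str h v)) ∧
    ∀ ρ : ℕ → G.V, G.IsPlay ρ →
      (∀ n, ρ n ∈ G.EveV → ρ (n + 1) = str (G.hist ρ n) (ρ n)) →
      G.InfCol ρ ∈ F

/-- The game `G` is `ε`-free: no edge is coloured by `ε`. -/
def EpsFree (G : Game Γ) : Prop :=
  ∀ v u, G.edge v u → G.col v u ≠ none

end Game

/-- A memory structure for the game `G`: a finite set of memory states with an
initial state, updated after reading the edges of the game. -/
structure Mem {Γ : Type} (G : Game Γ) where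
  M : Type
  [finM : Fintype M]
  m0 : M
  upd : M → G.V × G.V → M

attribute [instance] Mem.finM

namespace Mem

variable {Γ : Type} {G : Game Γ}

/-- The state of the memory after the first `n` moves of the play `ρ`. -/
def st (m : Mem G) (ρ : ℕ → G.V) : ℕ → m.M
  | 0 => m.m0
  | n + 1 => m.upd (st m ρ n) (ρ n, ρ (n + 1))

/-- The memory structure `m` sets a winning strategy in `G` for the Muller
condition `F`: there is a next-move function such that the induced strategy is
winning for Eve. -/
def SetsWinning (m : Mem G) (F : Set (Set Γ)) : Prop :=
  ∃ nm : G.V → m.M → G.V,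
    (∀ v x, v ∈ G.EveV → G.edge v (nm v x)) ∧
    ∀ ρ : ℕ → G.V, G.IsPlay ρ →
      (∀ n, ρ n ∈ G.EveV → ρ (n + 1) = nm (ρ n) (st m ρ n)) →
      G.InfCol ρ ∈ F

/-- The memory structure `m` is chromatic: its update function only depends on
the colours of the edges, and it does not move on `ε`-edges. -/
def Chromatic (m : Mem G) : Prop :=
  ∃ μ' : m.M → Γ → m.M, ∀ x v u, G.edge v u →
    (G.col v u = none → m.upd x (v, u) = x) ∧
    ∀ a, G.col v u = some a → m.upd x (v, u) = μ' x a

end Mem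

/-- An arena-independent memory skeleton: a finite set of memory states with an
initial state, updated by reading colours of `Γ`. -/
structure MemSkel (Γ : Type) where
  M : Type
  [finM : Fintype M]
  m0 : M
  upd : M → Γ → M

attribute [instance] MemSkel.finM

namespace MemSkel

variable {Γ : Type}

/-- The (chromatic) memory structure induced by the skeleton `s` on the game
`G`: the memory is updated by the colour of the edge read, and does not move
on `ε`-edges. -/
def toMem (s : MemSkel Γ) (G : Game Γ) : Mem G where
  M := s.M
  finM := s.finM
  m0 := s.m0
  upd := fun x e =>
    match G.col e.1 e.2 with
    | none => x
    | some a => s.upd x a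

/-- `s` is an arena-independent memory for the Muller condition `F`: for every
`F`-game won by Eve, the induced memory sets a winning strategy. -/
def ArenaIndep (s : MemSkel Γ) (F : Set (Set Γ)) : Prop :=
  ∀ G : Game Γ, G.WinsEve F → (s.toMem G).SetsWinning F

/-- `s` is an arena-independent memory for `ε`-free `F`-games. -/
def ArenaIndepEf (s : MemSkel Γ) (F : Set (Set Γ)) : Prop :=
  ∀ G : Game Γ, G.EpsFree → G.WinsEve F → (s.toMem G).SetsWinning F

end MemSkel

/-- `memGen F`: the least `n` such that every `F`-game won by Eve admits a
winning strategy set by a memory structure with `n` states. -/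
noncomputable def memGen {Γ : Type} (F : Set (Set Γ)) : ℕ :=
  sInf {n | ∀ G : Game Γ, G.WinsEve F →
    ∃ m : Mem G, Fintype.card m.M = n ∧ m.SetsWinning F}

/-- `memGenEf F`: as `memGen F`, quantifying only over `ε`-free games. -/
noncomputable def memGenEf {Γ : Type} (F : Set (Set Γ)) : ℕ :=
  sInf {n | ∀ G : Game Γ, G.EpsFree → G.WinsEve F →
    ∃ m : Mem G, Fintype.card m.M = n ∧ m.SetsWinning F}

/-- `memChrom F`: the least `n` such that every `F`-game won by Eve admits a
winning strategy set by a chromatic memory with `n` states. -/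
noncomputable def memChrom {Γ : Type} (F : Set (Set Γ)) : ℕ :=
  sInf {n | ∀ G : Game Γ, G.WinsEve F →
    ∃ m : Mem G, Fintype.card m.M = n ∧ m.Chromatic ∧ m.SetsWinning F}

/-- `memChromEf F`: as `memChrom F`, quantifying only over `ε`-free games. -/
noncomputable def memChromEf {Γ : Type} (F : Set (Set Γ)) : ℕ :=
  sInf {n | ∀ G : Game Γ, G.EpsFree → G.WinsEve F →
    ∃ m : Mem G, Fintype.card m.M = n ∧ m.Chromatic ∧ m.SetsWinning F}

/-- `memInd F`: the least size of an arena-independent memory for `F`. -/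
noncomputable def memInd {Γ : Type} (F : Set (Set Γ)) : ℕ :=
  sInf {n | ∃ s : MemSkel Γ, Fintype.card s.M = n ∧ s.ArenaIndep F}

/-- `memIndEf F`: the least size of an arena-independent memory for `ε`-free
`F`-games. -/
noncomputable def memIndEf {Γ : Type} (F : Set (Set Γ)) : ℕ :=
  sInf {n | ∃ s : MemSkel Γ, Fintype.card s.M = n ∧ s.ArenaIndepEf F}

namespace Stmt16Aux
open Classical

variable {Γ : Type} [Fintype Γ]

/-- The Muller condition `F_n`. -/
def FC (Γ : Type) : Set (Set Γ) := {A | 1 < A.ncard}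

lemma no_strict_desc (f : ℕ → ℕ) (h : ∀ t, f (t + 1) < f t) : False := by
  have key : ∀ t, f t + t ≤ f 0 := by
    intro t
    induction t with
    | zero => omega
    | succ k ih => have := h k; omega
  have := key (f 0 + 1); omega

lemma hist_succ {Γ : Type} (G : Game Γ) (ρ : ℕ → G.V) (k : ℕ) :
    G.hist ρ (k + 1) = G.hist ρ k ++ [ρ k] := by
  show List.ofFn (fun i : Fin (k+1) => ρ i.1) = _
  rw [List.ofFn_succ']
  simp [Game.hist, List.concat_eq_append, Fin.coe_castSucc, Fin.val_last]

lemma hist_zero {Γ : Type} (G : Game Γ) (ρ : ℕ → G.V) : G.hist ρ 0 = [] := rfl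

lemma hist_length {Γ : Type} (G : Game Γ) (ρ : ℕ → G.V) (k : ℕ) :
    (G.hist ρ k).length = k := by simp [Game.hist]

lemma hist_getLast {Γ : Type} (G : Game Γ) (ρ : ℕ → G.V) (k : ℕ) :
    (G.hist ρ (k + 1)).getLast? = some (ρ k) := by
  rw [hist_succ]; exact List.getLast?_concat

lemma infCol_shift {Γ : Type} (G : Game Γ) (ρ σ : ℕ → G.V) (t : ℕ)
    (h : ∀ k, σ k = ρ (k + t)) : G.InfCol ρ = G.InfCol σ := by
  ext a
  constructor
  · intro ha N
    obtain ⟨m, hm, hc⟩ := ha (N + t)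
    refine ⟨m - t, by omega, ?_⟩
    have e1 : σ (m - t) = ρ m := by rw [h]; congr 1; omega
    have e2 : σ (m - t + 1) = ρ (m + 1) := by rw [h]; congr 1; omega
    rw [e1, e2]; exact hc
  · intro ha N
    obtain ⟨m, hm, hc⟩ := ha N
    refine ⟨m + t, by omega, ?_⟩
    have e1 : σ m = ρ (m + t) := h m
    have e2 : σ (m + 1) = ρ (m + t + 1) := by rw [h]; congr 1; omega
    rw [← e1, ← e2]; exact hc

lemma pigeon (f : ℕ → Option Γ) (C : Set Γ)
    (h : ∀ N, ∃ m, N ≤ m ∧ ∃ a, f m = some a ∧ a ∈ C) :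
    ∃ a ∈ C, ∀ N, ∃ m, N ≤ m ∧ f m = some a := by
  by_contra hc
  push_neg at hc
  have key : ∀ a : Γ, ∃ N : ℕ, a ∈ C → ∀ m, N ≤ m → f m ≠ some a := by
    intro a
    by_cases ha : a ∈ C
    · obtain ⟨N, hN⟩ := hc a ha
      exact ⟨N, fun _ m hm => hN m hm⟩
    · exact ⟨0, fun h' => absurd h' ha⟩
  choose g hg using key
  obtain ⟨m, hm, a, hfa, haC⟩ := h (Finset.univ.sup g)
  exact hg a haC m (le_trans (Finset.le_sup (Finset.mem_univ a)) hm) hfa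

lemma chain_of_seq {V : Type} (r : V → V → Prop) (ρ : ℕ → V)
    (h : ∀ k, r (ρ k) (ρ (k + 1))) :
    ∀ (s a : ℕ), List.Chain r (ρ a) ((List.range s).map (fun k => ρ (a + 1 + k))) := by
  intro s
  induction s with
  | zero => intro a; simp; exact List.Chain.nil
  | succ k ih =>
    intro a
    rw [List.range_succ_eq_map, List.map_cons, List.map_map]
    refine List.Chain.cons (by simpa using h a) ?_
    have e : ((fun k => ρ (a + 1 + k)) ∘ Nat.succ) = (fun j => ρ (a + 1 + 1 + j)) := by
      funext j; simp only [Function.comp]; congr 1; omega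
    rw [e]
    exact ih (a + 1)

end Stmt16Aux
namespace Stmt16Aux
open Classical
set_option linter.unusedSectionVars false

variable {Γ : Type} [Fintype Γ]

lemma play_has_color (G : Game Γ) (ρ : ℕ → G.V)
    (hedge : ∀ k, G.edge (ρ k) (ρ (k + 1))) (N : ℕ) :
    ∃ m, N ≤ m ∧ G.col (ρ m) (ρ (m + 1)) ≠ none := by
  by_contra hcon
  push_neg at hcon
  set r : G.V → G.V → Prop := fun a b => G.edge a b ∧ G.col a b = none with hr
  set σ : ℕ → G.V := fun k => ρ (N + k) with hσ
  have hrs : ∀ k, r (σ k) (σ (k + 1)) := fun k => ⟨hedge (N + k), hcon (N + k) (by omega)⟩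
  have main : ∀ (i j : ℕ), i < j → σ i = σ j → False := by
    intro i j hij heq
    apply G.no_eps_cycle
    refine ⟨σ i, (List.range (j - i - 1)).map (fun k => σ (i + 1 + k)), ?_⟩
    have hch := chain_of_seq r σ hrs (j - i) i
    have hs : j - i = (j - i - 1) + 1 := by omega
    rw [hs, List.range_succ, List.map_append, List.map_singleton] at hch
    have hlast : σ (i + 1 + (j - i - 1)) = σ i := by rw [heq]; congr 1; omega
    rwa [hlast] at hch
  obtain ⟨x, y, hxy, hf⟩ := Fintype.exists_ne_map_eq_of_card_lt
    (fun i : Fin (Fintype.card G.V + 1) => σ i.1) (by simp)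
  rcases Nat.lt_or_ge x.1 y.1 with h | h
  · exact main x.1 y.1 h hf
  · have : y.1 < x.1 := lt_of_le_of_ne h (fun he => hxy (Fin.ext he.symm))
    exact main y.1 x.1 this hf.symm

lemma infCol_nonempty (G : Game Γ) (ρ : ℕ → G.V)
    (hedge : ∀ k, G.edge (ρ k) (ρ (k + 1))) : (G.InfCol ρ).Nonempty := by
  obtain ⟨a, -, ha⟩ := pigeon (fun m => G.col (ρ m) (ρ (m + 1))) Set.univ (by
    intro N
    obtain ⟨m, hm, hc⟩ := play_has_color G ρ hedge N
    cases hcol : G.col (ρ m) (ρ (m + 1)) with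
    | none => exact absurd hcol hc
    | some a => exact ⟨m, hm, a, hcol, trivial⟩)
  exact ⟨a, ha⟩

lemma eventually_col (G : Game Γ) (ρ : ℕ → G.V) (d : Γ)
    (h : ∀ a : Γ, a ∈ G.InfCol ρ → a = d) :
    ∃ T, ∀ m, T ≤ m → G.col (ρ m) (ρ (m + 1)) = none ∨ G.col (ρ m) (ρ (m + 1)) = some d := by
  have key : ∀ a : Γ, ∃ N : ℕ, a ≠ d → ∀ m, N ≤ m → G.col (ρ m) (ρ (m + 1)) ≠ some a := by
    intro a
    by_cases had : a = d
    · exact ⟨0, fun h' => absurd had h'⟩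
    · have hna : a ∉ G.InfCol ρ := fun hma => had (h a hma)
      simp only [Game.InfCol, Set.mem_setOf_eq] at hna
      push_neg at hna
      obtain ⟨N, hN⟩ := hna
      exact ⟨N, fun _ m hm => hN m hm⟩
  choose g hg using key
  refine ⟨Finset.univ.sup g, fun m hm => ?_⟩
  cases hcol : G.col (ρ m) (ρ (m + 1)) with
  | none => exact Or.inl rfl
  | some a =>
    by_cases had : a = d
    · exact Or.inr (by rw [had])
    · exact absurd hcol (hg a had m (le_trans (Finset.le_sup (Finset.mem_univ a)) hm))

/-! ### The winning region -/

@[reducible] def Gat (G : Game Γ) (v : G.V) : Game Γ := { G with v0 := v }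

lemma Gat_self (G : Game Γ) : Gat G G.v0 = G := rfl

def Win (G : Game Γ) : Set G.V := {v | (Gat G v).WinsEve (FC Γ)}

lemma win_prepend (G : Game Γ) (v : G.V)
    (str : List G.V → G.V → G.V)
    (hval : ∀ h w, w ∈ G.EveV → G.edge w (str h w))
    (hwin : ∀ ρ : ℕ → G.V, (Gat G v).IsPlay ρ →
      (∀ n, ρ n ∈ G.EveV → ρ (n + 1) = str (G.hist ρ n) (ρ n)) → G.InfCol ρ ∈ FC Γ)
    (u : G.V) (he : G.edge v u) (hEve : v ∈ G.EveV → u = str [] v) :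
    u ∈ Win G := by
  refine ⟨fun h w => str (v :: h) w, fun h w hw => hval _ w hw, ?_⟩
  intro σ hσ hcons
  set ρ : ℕ → G.V := fun k => Nat.rec v (fun k _ => σ k) k with hρ
  have hρ0 : ρ 0 = v := rfl
  have hρs : ∀ k, ρ (k + 1) = σ k := fun k => rfl
  have hplay : (Gat G v).IsPlay ρ := by
    refine ⟨rfl, fun n => ?_⟩
    cases n with
    | zero =>
      have h0 : σ 0 = u := hσ.1
      show G.edge v (σ 0)
      rw [h0]; exact he
    | succ k => exact hσ.2 k
  have hcons' : ∀ n, ρ n ∈ G.EveV → ρ (n + 1) = str (G.hist ρ n) (ρ n) := by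
    intro n hn
    cases n with
    | zero =>
      have h0 : σ 0 = u := hσ.1
      show σ 0 = str [] v
      rw [h0]
      exact hEve hn
    | succ k =>
      have hh : G.hist ρ (k + 1) = v :: G.hist σ k := by
        show List.ofFn (fun i : Fin (k + 1) => ρ i.1) = _
        rw [List.ofFn_succ]
        rfl
      have hk := hcons k hn
      show σ (k + 1) = str (G.hist ρ (k + 1)) (σ k)
      rw [hh]
      exact hk
  have hF := hwin ρ hplay hcons'
  have heq : G.InfCol ρ = G.InfCol σ := infCol_shift G ρ σ 1 (fun k => rfl)
  rwa [heq] at hF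

lemma win_adam_succ (G : Game Γ) {v : G.V} (hv : v ∈ Win G) (hA : v ∉ G.EveV)
    {u : G.V} (he : G.edge v u) : u ∈ Win G := by
  obtain ⟨str, hval, hwin⟩ := hv
  exact win_prepend G v str hval hwin u he (fun h => absurd h hA)

lemma win_eve_succ (G : Game Γ) {v : G.V} (hv : v ∈ Win G) (hE : v ∈ G.EveV) :
    ∃ u, G.edge v u ∧ u ∈ Win G := by
  obtain ⟨str, hval, hwin⟩ := hv
  exact ⟨str [] v, hval [] v hE,
    win_prepend G v str hval hwin _ (hval [] v hE) (fun _ => rfl)⟩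

end Stmt16Aux
namespace Stmt16Aux
open Classical
set_option linter.unusedSectionVars false

variable {Γ : Type} [Fintype Γ]

lemma win_stay (G : Game Γ) {v : G.V}
    (str : List G.V → G.V → G.V)
    (hval : ∀ h w, w ∈ G.EveV → G.edge w (str h w))
    (hwin : ∀ ρ : ℕ → G.V, (Gat G v).IsPlay ρ →
      (∀ n, ρ n ∈ G.EveV → ρ (n + 1) = str (G.hist ρ n) (ρ n)) → G.InfCol ρ ∈ FC Γ)
    (ρ : ℕ → G.V) (hplay : (Gat G v).IsPlay ρ)
    (hcons : ∀ n, ρ n ∈ G.EveV → ρ (n + 1) = str (G.hist ρ n) (ρ n))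
    (t : ℕ) : ρ t ∈ Win G := by
  refine ⟨fun h w => str (G.hist ρ t ++ h) w, fun h w hw => hval _ w hw, ?_⟩
  intro σ hσ hconsσ
  set ρ' : ℕ → G.V := fun k => if k < t then ρ k else σ (k - t) with hρ'
  have hagree : ∀ k, k ≤ t → ρ' k = ρ k := by
    intro k hk
    by_cases h : k < t
    · simp [hρ', h]
    · have hkt : k = t := by omega
      subst hkt
      have h0 : σ 0 = ρ k := hσ.1
      simp [hρ', h0]
  have hhi : ∀ k, ρ' (k + t) = σ k := by
    intro k
    simp only [hρ', show ¬(k + t < t) by omega, if_false, Nat.add_sub_cancel]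
  have hplay' : (Gat G v).IsPlay ρ' := by
    constructor
    · rw [hagree 0 (by omega)]; exact hplay.1
    · intro n
      rcases Nat.lt_or_ge (n + 1) (t + 1) with h | h
      · rw [hagree n (by omega), hagree (n + 1) (by omega)]; exact hplay.2 n
      · have e1 : ρ' n = σ (n - t) := by
          rw [← hhi (n - t)]; congr 1; omega
        have e2 : ρ' (n + 1) = σ (n - t + 1) := by
          rw [← hhi (n - t + 1)]; congr 1; omega
        rw [e1, e2]; exact hσ.2 (n - t)
  have hhistlow : ∀ k, k ≤ t → G.hist ρ' k = G.hist ρ k := by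
    intro k hk
    exact congrArg List.ofFn (funext fun i => hagree i.1 (by omega))
  have hhist : ∀ s, G.hist ρ' (t + s) = G.hist ρ t ++ G.hist σ s := by
    intro s
    induction s with
    | zero =>
      show G.hist ρ' (t + 0) = G.hist ρ t ++ G.hist σ 0
      rw [hist_zero, List.append_nil]
      exact hhistlow t le_rfl
    | succ k ih =>
      show G.hist ρ' (t + k + 1) = G.hist ρ t ++ G.hist σ (k + 1)
      rw [hist_succ, ih, hist_succ, List.append_assoc]
      have e : ρ' (t + k) = σ k := by rw [Nat.add_comm]; exact hhi k
      rw [e]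
  have hcons'' : ∀ n, ρ' n ∈ G.EveV → ρ' (n + 1) = str (G.hist ρ' n) (ρ' n) := by
    intro n hn
    rcases Nat.lt_or_ge n t with h | h
    · have hn' : ρ n ∈ G.EveV := by rwa [hagree n h.le] at hn
      calc ρ' (n + 1) = ρ (n + 1) := hagree _ (by omega)
        _ = str (G.hist ρ n) (ρ n) := hcons n hn'
        _ = str (G.hist ρ' n) (ρ' n) := by rw [hhistlow n h.le, hagree n h.le]
    · obtain ⟨s, rfl⟩ : ∃ s, n = t + s := ⟨n - t, by omega⟩
      have e1 : ρ' (t + s) = σ s := by rw [Nat.add_comm]; exact hhi s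
      have e2 : ρ' (t + s + 1) = σ (s + 1) := by
        rw [show t + s + 1 = (s + 1) + t by omega]; exact hhi (s + 1)
      have hσE : σ s ∈ G.EveV := by rwa [e1] at hn
      have hc := hconsσ s hσE
      rw [e1, e2, hhist s]
      exact hc
  have hF := hwin ρ' hplay' hcons''
  have heq : G.InfCol ρ' = G.InfCol σ := infCol_shift G ρ' σ t (fun k => (hhi k).symm)
  rwa [heq] at hF

end Stmt16Aux
namespace Stmt16Aux
open Classical
set_option linter.unusedSectionVars false

variable {Γ : Type} [Fintype Γ]

/-- Peeling of the region where Adam can keep the colour `c` (or `ε`) forever. -/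
def Zset (G : Game Γ) (c : Γ) : ℕ → Set G.V
  | 0 => Win G
  | k + 1 =>
    {v | v ∈ Win G ∧
      (v ∈ G.EveV → ∀ u, G.edge v u → u ∈ Win G →
        (G.col v u = none ∨ G.col v u = some c) ∧ u ∈ Zset G c k) ∧
      (v ∉ G.EveV → ∃ u, G.edge v u ∧
        (G.col v u = none ∨ G.col v u = some c) ∧ u ∈ Zset G c k)}

lemma Zset_subset_win (G : Game Γ) (c : Γ) : ∀ k, Zset G c k ⊆ Win G := by
  intro k
  cases k with
  | zero => exact fun v hv => hv
  | succ k => exact fun v hv => hv.1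

lemma Zset_anti (G : Game Γ) (c : Γ) : ∀ k, Zset G c (k + 1) ⊆ Zset G c k := by
  intro k
  induction k with
  | zero => exact fun v hv => hv.1
  | succ k ih =>
    intro v hv
    refine ⟨hv.1, fun hE u he hu => ⟨(hv.2.1 hE u he hu).1, ih (hv.2.1 hE u he hu).2⟩,
      fun hA => ?_⟩
    obtain ⟨u, he, hc, hz⟩ := hv.2.2 hA
    exact ⟨u, he, hc, ih hz⟩

lemma Zset_fix (G : Game Γ) (c : Γ) : ∃ K, Zset G c K = Zset G c (K + 1) := by
  by_contra h
  push_neg at h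
  have hstrict : ∀ k, Zset G c (k + 1) ⊂ Zset G c k := fun k =>
    HasSubset.Subset.ssubset_of_ne (Zset_anti G c k) (fun he => h k he.symm)
  have hcard : ∀ k, (Zset G c k).ncard + k ≤ (Zset G c 0).ncard := by
    intro k
    induction k with
    | zero => omega
    | succ k ih =>
      have := Set.ncard_lt_ncard (hstrict k) (Set.toFinite _)
      omega
  have := hcard ((Zset G c 0).ncard + 1)
  omega

lemma Zfix_empty (G : Game Γ) (c : Γ) {K : ℕ} (hK : Zset G c K = Zset G c (K + 1)) :
    Zset G c K = ∅ := by
  by_contra hne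
  obtain ⟨v, hv⟩ := Set.nonempty_iff_ne_empty.mpr hne
  have hvW : v ∈ Win G := Zset_subset_win G c K hv
  obtain ⟨str, hval, hwin⟩ := hvW
  -- a total "next move" function
  let next : G.V → List G.V → G.V := fun w h =>
    if hw : w ∈ G.EveV then str h w
    else if hz : ∃ u, G.edge w u ∧ (G.col w u = none ∨ G.col w u = some c) ∧ u ∈ Zset G c K
      then hz.choose
      else (G.exists_succ w).choose
  let aux : ℕ → List G.V × G.V := fun t =>
    Nat.rec ([], v) (fun _ p => (p.1 ++ [p.2], next p.2 p.1)) t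
  let ρ : ℕ → G.V := fun t => (aux t).2
  have hauxρ : ∀ t, ρ (t + 1) = next (ρ t) (aux t).1 := fun t => rfl
  have hhist : ∀ t, G.hist ρ t = (aux t).1 := by
    intro t
    induction t with
    | zero => rfl
    | succ k ih =>
      rw [hist_succ, ih]
  have hplay : (Gat G v).IsPlay ρ := by
    refine ⟨rfl, fun n => ?_⟩
    rw [hauxρ n]
    by_cases hw : ρ n ∈ G.EveV
    · simp only [next, dif_pos hw]; exact hval _ _ hw
    · simp only [next, dif_neg hw]
      by_cases hz : ∃ u, G.edge (ρ n) u ∧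
          (G.col (ρ n) u = none ∨ G.col (ρ n) u = some c) ∧ u ∈ Zset G c K
      · simp only [dif_pos hz]; exact hz.choose_spec.1
      · simp only [dif_neg hz]; exact (G.exists_succ (ρ n)).choose_spec
  have hcons : ∀ n, ρ n ∈ G.EveV → ρ (n + 1) = str (G.hist ρ n) (ρ n) := by
    intro n hn
    rw [hauxρ n, hhist n]
    simp only [next, dif_pos hn]
  have hstay : ∀ t, ρ t ∈ Win G := win_stay G str hval hwin ρ hplay hcons
  have hZ : ∀ t, ρ t ∈ Zset G c K := by
    intro t
    induction t with
    | zero => exact hv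
    | succ k ih =>
      have hkk : ρ k ∈ Zset G c (K + 1) := hK ▸ ih
      by_cases hw : ρ k ∈ G.EveV
      · have hmove : ρ (k + 1) = str (G.hist ρ k) (ρ k) := hcons k hw
        have hedge : G.edge (ρ k) (ρ (k + 1)) := hplay.2 k
        exact (hkk.2.1 hw (ρ (k + 1)) hedge (hstay (k + 1))).2
      · have hz : ∃ u, G.edge (ρ k) u ∧
            (G.col (ρ k) u = none ∨ G.col (ρ k) u = some c) ∧ u ∈ Zset G c K :=
          hkk.2.2 hw
        have : ρ (k + 1) = hz.choose := by
          rw [hauxρ k]; simp only [next, dif_neg hw, dif_pos hz]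
        rw [this]
        exact hz.choose_spec.2.2
  have hcol : ∀ t, G.col (ρ t) (ρ (t + 1)) = none ∨ G.col (ρ t) (ρ (t + 1)) = some c := by
    intro t
    have hkk : ρ t ∈ Zset G c (K + 1) := hK ▸ hZ t
    by_cases hw : ρ t ∈ G.EveV
    · exact (hkk.2.1 hw (ρ (t + 1)) (hplay.2 t) (hstay (t + 1))).1
    · have hz : ∃ u, G.edge (ρ t) u ∧
          (G.col (ρ t) u = none ∨ G.col (ρ t) u = some c) ∧ u ∈ Zset G c K :=
        hkk.2.2 hw
      have : ρ (t + 1) = hz.choose := by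
        rw [hauxρ t]; simp only [next, dif_neg hw, dif_pos hz]
      rw [this]
      exact hz.choose_spec.2.1
  have hsub : G.InfCol ρ ⊆ {c} := by
    intro a ha
    obtain ⟨m, -, hc⟩ := ha 0
    rcases hcol m with h | h
    · rw [hc] at h; exact absurd h (by simp)
    · rw [hc] at h
      exact Option.some.inj h
  have hF := hwin ρ hplay hcons
  have hle : (G.InfCol ρ).ncard ≤ 1 :=
    le_trans (Set.ncard_le_ncard hsub (Set.finite_singleton c))
      (le_of_eq (Set.ncard_singleton c))
  have hF' : 1 < (G.InfCol ρ).ncard := hF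
  omega

lemma rk_exists (G : Game Γ) (c : Γ) (v : G.V) : ∃ k, v ∉ Zset G c (k + 1) := by
  obtain ⟨K, hK⟩ := Zset_fix G c
  have hemp := Zfix_empty G c hK
  cases K with
  | zero =>
    refine ⟨0, ?_⟩
    rw [← hK, hemp]
    exact fun h => h
  | succ k =>
    refine ⟨k, ?_⟩
    rw [hemp]
    exact fun h => h

/-- Rank of a vertex for the colour `c`. -/
noncomputable def rk (G : Game Γ) (c : Γ) (v : G.V) : ℕ :=
  sInf {k | v ∉ Zset G c (k + 1)}

lemma rk_spec (G : Game Γ) (c : Γ) (v : G.V) : v ∉ Zset G c (rk G c v + 1) :=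
  Nat.sInf_mem (rk_exists G c v)

lemma mem_Z_of_le_rk (G : Game Γ) (c : Γ) {u : G.V} (hu : u ∈ Win G) {k : ℕ}
    (hk : k ≤ rk G c u) : u ∈ Zset G c k := by
  cases k with
  | zero => exact hu
  | succ j =>
    have hj : j < rk G c u := by omega
    have := Nat.notMem_of_lt_sInf hj
    simp only [Set.mem_setOf_eq, not_not] at this
    exact this

lemma rk_lt (G : Game Γ) (c : Γ) {u : G.V} (hu : u ∈ Win G) {k : ℕ}
    (h : u ∉ Zset G c k) : rk G c u < k := by
  cases k with
  | zero => exact absurd hu h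
  | succ j => exact Nat.lt_succ_of_le (Nat.sInf_le h)

lemma eve_progress (G : Game Γ) (c : Γ) {v : G.V} (hv : v ∈ Win G) (hE : v ∈ G.EveV) :
    ∃ u, G.edge v u ∧ u ∈ Win G ∧
      ((G.col v u ≠ none ∧ G.col v u ≠ some c) ∨ rk G c u < rk G c v) := by
  have hnot := rk_spec G c v
  by_contra hcon
  push_neg at hcon
  apply hnot
  refine ⟨hv, fun _ u he huW => ?_, fun hA => absurd hE hA⟩
  obtain ⟨h1, h2⟩ := hcon u he huW
  constructor
  · cases hco : G.col v u with
    | none => exact Or.inl rfl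
    | some a =>
      refine Or.inr ?_
      rw [← hco]
      exact h1 (by rw [hco]; exact fun h => nomatch h)
  · exact mem_Z_of_le_rk G c huW h2

lemma adam_progress (G : Game Γ) (c : Γ) {v : G.V} (hv : v ∈ Win G) (hA : v ∉ G.EveV) :
    ∀ u, G.edge v u → u ∈ Win G ∧
      ((G.col v u ≠ none ∧ G.col v u ≠ some c) ∨ rk G c u < rk G c v) := by
  intro u he
  have huW : u ∈ Win G := win_adam_succ G hv hA he
  refine ⟨huW, ?_⟩
  have hnot := rk_spec G c v
  by_contra hcon
  push_neg at hcon
  apply hnot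
  refine ⟨hv, fun hE => absurd hE hA, fun _ => ⟨u, he, ?_, mem_Z_of_le_rk G c huW hcon.2⟩⟩
  cases hco : G.col v u with
  | none => exact Or.inl rfl
  | some a =>
    refine Or.inr ?_
    rw [← hco]
    exact hcon.1 (by rw [hco]; exact fun h => nomatch h)

end Stmt16Aux
namespace Stmt16Aux
open Classical
set_option linter.unusedSectionVars false
set_option maxHeartbeats 1000000

variable {Γ : Type} [Fintype Γ]

/-! ### Upper bound `n` for general games: the "last colour" memory -/

noncomputable def lastColMem (G : Game Γ) [Inhabited Γ] : Mem G where
  M := Γ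
  finM := inferInstance
  m0 := default
  upd := fun x e => (G.col e.1 e.2).getD x

noncomputable def genNm (G : Game Γ) : G.V → Γ → G.V := fun v x =>
  if h : v ∈ Win G ∧ v ∈ G.EveV then (eve_progress G x h.1 h.2).choose
  else (G.exists_succ v).choose

lemma genNm_pos (G : Game Γ) {v : G.V} (h : v ∈ Win G ∧ v ∈ G.EveV) (x : Γ) :
    genNm G v x = (eve_progress G x h.1 h.2).choose := dif_pos h

lemma genNm_edge (G : Game Γ) (v : G.V) (x : Γ) : G.edge v (genNm G v x) := by
  by_cases h : v ∈ Win G ∧ v ∈ G.EveV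
  · rw [genNm_pos G h]; exact (eve_progress G x h.1 h.2).choose_spec.1
  · rw [genNm, dif_neg h]; exact (G.exists_succ v).choose_spec

theorem upper_gen [Inhabited Γ] (G : Game Γ) (hwin : G.WinsEve (FC Γ)) :
    ∃ m : Mem G, Fintype.card m.M = Fintype.card Γ ∧ m.SetsWinning (FC Γ) := by
  classical
  have hv0 : G.v0 ∈ Win G := hwin
  refine ⟨lastColMem G, rfl, ?_⟩
  set mem : Mem G := lastColMem G with hmem
  refine ⟨genNm G, fun v x _ => genNm_edge G v x, ?_⟩
  intro ρ hplay hconsρ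
  have hedges : ∀ k, G.edge (ρ k) (ρ (k + 1)) := hplay.2
  have hstay : ∀ t, ρ t ∈ Win G := by
    intro t
    induction t with
    | zero => rw [hplay.1]; exact hv0
    | succ k ih =>
      by_cases hw : ρ k ∈ G.EveV
      · have hmv := hconsρ k hw
        have h' : ρ k ∈ Win G ∧ ρ k ∈ G.EveV := ⟨ih, hw⟩
        rw [genNm_pos G h' (Mem.st mem ρ k)] at hmv
        rw [hmv]
        exact (eve_progress G _ h'.1 h'.2).choose_spec.2.1
      · exact win_adam_succ G ih hw (hedges k)
  by_contra hnc
  obtain ⟨d, hd⟩ := infCol_nonempty G ρ hedges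
  have hall : ∀ a, a ∈ G.InfCol ρ → a = d := by
    intro a ha
    by_contra hne
    exact hnc ((Set.one_lt_ncard (Set.toFinite _)).mpr ⟨a, ha, d, hd, hne⟩)
  obtain ⟨T, hT⟩ := eventually_col G ρ d hall
  obtain ⟨T2, hT2ge, hT2⟩ := hd T
  have hst : ∀ t, T2 + 1 ≤ t → Mem.st mem ρ t = d := by
    intro t ht
    induction t, ht using Nat.le_induction with
    | base =>
      show (G.col (ρ T2) (ρ (T2 + 1))).getD (Mem.st mem ρ T2) = d
      rw [hT2]
      rfl
    | succ t ht ih =>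
      show (G.col (ρ t) (ρ (t + 1))).getD (Mem.st mem ρ t) = d
      rcases hT t (by omega) with h | h
      · rw [h, ih]; rfl
      · rw [h]; rfl
  have hdec : ∀ s, rk G d (ρ (T2 + 1 + s + 1)) < rk G d (ρ (T2 + 1 + s)) := by
    intro s
    set t := T2 + 1 + s with hts
    have htT : T ≤ t := by omega
    have hWt : ρ t ∈ Win G := hstay t
    have hcolt := hT t htT
    by_cases hw : ρ t ∈ G.EveV
    · have hmv := hconsρ t hw
      have h' : ρ t ∈ Win G ∧ ρ t ∈ G.EveV := ⟨hWt, hw⟩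
      rw [genNm_pos G h' (Mem.st mem ρ t), hst t (by omega)] at hmv
      have hspec := (eve_progress G d h'.1 h'.2).choose_spec
      rw [← hmv] at hspec
      rcases hspec.2.2 with ⟨hn1, hn2⟩ | hlt
      · rcases hcolt with h | h
        · exact absurd h hn1
        · exact absurd h hn2
      · exact hlt
    · rcases (adam_progress G d hWt hw (ρ (t + 1)) (hedges t)).2 with ⟨hn1, hn2⟩ | hlt
      · rcases hcolt with h | h
        · exact absurd h hn1
        · exact absurd h hn2
      · exact hlt
  exact no_strict_desc (fun s => rk G d (ρ (T2 + 1 + s))) hdec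

/-! ### Upper bound `2` for `ε`-free games -/

noncomputable def efMem (G : Game Γ) (χ : G.V → Γ) : Mem G where
  M := Bool
  finM := inferInstance
  m0 := false
  upd := fun _ e => if G.col e.1 e.2 = some (χ e.2) then true else false

noncomputable def efNm (G : Game Γ) (χ : G.V → Γ) : G.V → Bool → G.V := fun v b =>
  if h : v ∈ Win G ∧ v ∈ G.EveV then
    (if b then (eve_progress G (χ v) h.1 h.2).choose
     else (win_eve_succ G h.1 h.2).choose)
  else (G.exists_succ v).choose

lemma efNm_true (G : Game Γ) (χ : G.V → Γ) {v : G.V} (h : v ∈ Win G ∧ v ∈ G.EveV) :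
    efNm G χ v true = (eve_progress G (χ v) h.1 h.2).choose := by
  rw [efNm, dif_pos h]; rfl

lemma efNm_false (G : Game Γ) (χ : G.V → Γ) {v : G.V} (h : v ∈ Win G ∧ v ∈ G.EveV) :
    efNm G χ v false = (win_eve_succ G h.1 h.2).choose := by
  rw [efNm, dif_pos h]; rfl

lemma efNm_edge (G : Game Γ) (χ : G.V → Γ) (v : G.V) (b : Bool) : G.edge v (efNm G χ v b) := by
  by_cases h : v ∈ Win G ∧ v ∈ G.EveV
  · cases b with
    | true => rw [efNm_true G χ h]; exact (eve_progress G (χ v) h.1 h.2).choose_spec.1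
    | false => rw [efNm_false G χ h]; exact (win_eve_succ G h.1 h.2).choose_spec.1
  · rw [efNm, dif_neg h]; exact (G.exists_succ v).choose_spec

theorem upper_ef [Inhabited Γ] (G : Game Γ) (hef : G.EpsFree) (hwin : G.WinsEve (FC Γ)) :
    ∃ m : Mem G, Fintype.card m.M = 2 ∧ m.SetsWinning (FC Γ) := by
  classical
  have hv0 : G.v0 ∈ Win G := hwin
  have col_eq : ∀ v u : G.V, G.edge v u →
      G.col v u = some ((G.col v u).getD default) := by
    intro v u he
    cases h : G.col v u with
    | none => exact absurd h (hef v u he)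
    | some a => rfl
  set χ : G.V → Γ := fun v =>
    if h : v ∈ Win G ∧ v ∈ G.EveV then
      (G.col v ((win_eve_succ G h.1 h.2).choose)).getD default
    else default with hχ
  refine ⟨efMem G χ, by simp [efMem], ?_⟩
  set mem : Mem G := efMem G χ with hmem
  refine ⟨efNm G χ, fun v b _ => efNm_edge G χ v b, ?_⟩
  intro ρ hplay hconsρ
  have hedges : ∀ k, G.edge (ρ k) (ρ (k + 1)) := hplay.2
  have hstay : ∀ t, ρ t ∈ Win G := by
    intro t
    induction t with
    | zero => rw [hplay.1]; exact hv0
    | succ k ih =>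
      by_cases hw : ρ k ∈ G.EveV
      · have hmv := hconsρ k hw
        have h' : ρ k ∈ Win G ∧ ρ k ∈ G.EveV := ⟨ih, hw⟩
        rw [hmv]
        cases hb : (Mem.st mem ρ k : Bool) with
        | true =>
          rw [efNm_true G χ h']
          exact (eve_progress G (χ (ρ k)) h'.1 h'.2).choose_spec.2.1
        | false =>
          rw [efNm_false G χ h']
          exact (win_eve_succ G h'.1 h'.2).choose_spec.2
      · exact win_adam_succ G ih hw (hedges k)
  by_contra hnc
  obtain ⟨d, hd⟩ := infCol_nonempty G ρ hedges
  have hall : ∀ a, a ∈ G.InfCol ρ → a = d := by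
    intro a ha
    by_contra hne
    exact hnc ((Set.one_lt_ncard (Set.toFinite _)).mpr ⟨a, ha, d, hd, hne⟩)
  obtain ⟨T, hT⟩ := eventually_col G ρ d hall
  have hTc : ∀ t, T ≤ t → G.col (ρ t) (ρ (t + 1)) = some d := by
    intro t ht
    rcases hT t ht with h | h
    · exact absurd h (hef _ _ (hedges t))
    · exact h
  have hdec : ∀ s, rk G d (ρ (T + 1 + s + 1)) < rk G d (ρ (T + 1 + s)) := by
    intro s
    set t := T + 1 + s with hts
    have hWt : ρ t ∈ Win G := hstay t
    have hcolt : G.col (ρ t) (ρ (t + 1)) = some d := hTc t (by omega)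
    by_cases hw : ρ t ∈ G.EveV
    · have hmv := hconsρ t hw
      have h' : ρ t ∈ Win G ∧ ρ t ∈ G.EveV := ⟨hWt, hw⟩
      have hprev : G.col (ρ (T + s)) (ρ (T + s + 1)) = some d := hTc (T + s) (by omega)
      have hidx : ρ (T + s + 1) = ρ t := by rw [hts]; congr 1; omega
      have hsteq : Mem.st mem ρ t =
          (if G.col (ρ (T + s)) (ρ (T + s + 1)) = some (χ (ρ (T + s + 1))) then true
           else false) := by
        have he : t = (T + s) + 1 := by omega
        rw [he]
        rfl
      by_cases hxd : χ (ρ t) = d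
      · have hP : G.col (ρ (T + s)) (ρ (T + s + 1)) = some (χ (ρ (T + s + 1))) := by
          rw [hprev, hidx, hxd]
        have hbit : Mem.st mem ρ t = true := by rw [hsteq, if_pos hP]
        rw [hbit, efNm_true G χ h'] at hmv
        have hspec := (eve_progress G (χ (ρ t)) h'.1 h'.2).choose_spec
        rw [← hmv, hxd] at hspec
        rcases hspec.2.2 with ⟨hn1, hn2⟩ | hlt
        · exact absurd hcolt hn2
        · exact hlt
      · have hnP : ¬(G.col (ρ (T + s)) (ρ (T + s + 1)) = some (χ (ρ (T + s + 1)))) := by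
          rw [hprev, hidx]
          intro hcontra
          exact hxd (Option.some.inj hcontra).symm
        have hbit : Mem.st mem ρ t = false := by rw [hsteq, if_neg hnP]
        rw [hbit, efNm_false G χ h'] at hmv
        exfalso
        have hχv : χ (ρ t) =
            (G.col (ρ t) ((win_eve_succ G h'.1 h'.2).choose)).getD default := by
          simp only [hχ]
          rw [dif_pos h']
        have hbase : G.col (ρ t) ((win_eve_succ G h'.1 h'.2).choose) =
            some (χ (ρ t)) := by
          have hce := col_eq (ρ t) ((win_eve_succ G h'.1 h'.2).choose)
            (win_eve_succ G h'.1 h'.2).choose_spec.1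
          rw [hce, hχv]
        rw [← hmv, hcolt] at hbase
        exact hxd (Option.some.inj hbase).symm
    · rcases (adam_progress G d hWt hw (ρ (t + 1)) (hedges t)).2 with ⟨hn1, hn2⟩ | hlt
      · exact absurd hcolt hn2
      · exact hlt
  exact no_strict_desc (fun s => rk G d (ρ (T + 1 + s))) hdec

end Stmt16Aux
namespace Stmt16Aux
open Classical
set_option linter.unusedSectionVars false
set_option maxHeartbeats 1000000

/-! ### The `ε`-free lower bound game: Eve must alternate between two colours -/

@[reducible] def Bgame (n : ℕ) (hn : 2 ≤ n) : Game (Fin n) where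
  V := Fin 3
  finV := inferInstance
  EveV := {0}
  edge := fun v u => (v = 0 ∧ u ≠ 0) ∨ (u = 0 ∧ v ≠ 0)
  v0 := 0
  col := fun v u => some (if v = 2 ∨ u = 2 then ⟨1, by omega⟩ else ⟨0, by omega⟩)
  exists_succ := by
    intro v
    by_cases h : v = 0
    · exact ⟨1, Or.inl ⟨h, by decide⟩⟩
    · exact ⟨0, Or.inr ⟨rfl, h⟩⟩
  no_eps_cycle := by
    rintro ⟨v, l, hch⟩
    rcases l with _ | ⟨y, l'⟩
    · simp only [List.nil_append, List.Chain, List.chain_cons] at hch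
      exact nomatch hch.1.2
    · simp only [List.cons_append, List.Chain, List.chain_cons] at hch
      exact nomatch hch.1.2

lemma Bgame_epsfree (n : ℕ) (hn : 2 ≤ n) : (Bgame n hn).EpsFree :=
  fun _ _ _ h => nomatch h

theorem Bgame_wins (n : ℕ) (hn : 2 ≤ n) : (Bgame n hn).WinsEve (FC (Fin n)) := by
  have f10 : (1 : Fin 3) ≠ 0 := by decide
  have f20 : (2 : Fin 3) ≠ 0 := by decide
  refine ⟨fun h _ => if h.length % 4 = 0 then 1 else 2, ?_, ?_⟩
  · intro h v hv
    have hv0 : v = 0 := hv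
    subst hv0
    show (Bgame n hn).edge 0 (if h.length % 4 = 0 then (1 : Fin 3) else 2)
    by_cases hl : h.length % 4 = 0
    · rw [if_pos hl]; exact Or.inl ⟨rfl, f10⟩
    · rw [if_neg hl]; exact Or.inl ⟨rfl, f20⟩
  · intro ρ hplay hcons
    have hstruct : ∀ k, ρ (2 * k) = 0 ∧ ρ (2 * k + 1) = (if k % 2 = 0 then 1 else 2) := by
      intro k
      induction k with
      | zero =>
        refine ⟨hplay.1, ?_⟩
        have h := hcons 0 (by rw [hplay.1]; try exact rfl)
        have hlen : ((Bgame n hn).hist ρ 0).length = 0 := hist_length _ ρ 0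
        rw [h]
        show (if ((Bgame n hn).hist ρ 0).length % 4 = 0 then (1 : Fin 3) else 2) = _
        rw [hlen]
      | succ k ih =>
        obtain ⟨h2k, h2k1⟩ := ih
        have hstep : ρ (2 * k + 2) = 0 := by
          rcases hplay.2 (2 * k + 1) with ⟨ha, -⟩ | ⟨hb, -⟩
          · rw [h2k1] at ha
            by_cases hk : k % 2 = 0
            · rw [if_pos hk] at ha
              exact absurd ha f10
            · rw [if_neg hk] at ha
              exact absurd ha f20
          · exact hb
        have e1 : 2 * (k + 1) = 2 * k + 2 := by ring
        refine ⟨by rw [e1]; exact hstep, ?_⟩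
        have hEve : ρ (2 * k + 2) ∈ (Bgame n hn).EveV := by rw [hstep]; exact rfl
        have h := hcons (2 * k + 2) hEve
        have hlen : ((Bgame n hn).hist ρ (2 * k + 2)).length = 2 * k + 2 :=
          hist_length _ ρ _
        have e2 : 2 * (k + 1) + 1 = (2 * k + 2) + 1 := by ring
        rw [e2, h]
        show (if ((Bgame n hn).hist ρ (2 * k + 2)).length % 4 = 0 then (1 : Fin 3) else 2) = _
        rw [hlen]
        by_cases hk : (k + 1) % 2 = 0
        · rw [if_pos (by omega), if_pos hk]
        · rw [if_neg (by omega), if_neg hk]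
    have hc0 : (⟨0, by omega⟩ : Fin n) ∈ (Bgame n hn).InfCol ρ := by
      intro N
      refine ⟨2 * (2 * N), by omega, ?_⟩
      have h1 := (hstruct (2 * N)).1
      have h2 := (hstruct (2 * N)).2
      rw [if_pos (by omega)] at h2
      rw [h1, h2]
      show some (if (0 : Fin 3) = 2 ∨ (1 : Fin 3) = 2 then _ else _) = _
      rw [if_neg (by decide)]
    have hc1 : (⟨1, by omega⟩ : Fin n) ∈ (Bgame n hn).InfCol ρ := by
      intro N
      refine ⟨2 * (2 * N + 1), by omega, ?_⟩
      have h1 := (hstruct (2 * N + 1)).1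
      have h2 := (hstruct (2 * N + 1)).2
      rw [if_neg (by omega)] at h2
      rw [h1, h2]
      show some (if (0 : Fin 3) = 2 ∨ (2 : Fin 3) = 2 then _ else _) = _
      rw [if_pos (by decide)]
    exact (Set.one_lt_ncard (Set.toFinite _)).mpr
      ⟨_, hc0, _, hc1, by intro h; rw [Fin.mk.injEq] at h; omega⟩

theorem Bgame_no_small (n : ℕ) (hn : 2 ≤ n) (m : Mem (Bgame n hn))
    (hcard : Fintype.card m.M ≤ 1) : ¬ m.SetsWinning (FC (Fin n)) := by
  rintro ⟨nm, hval, hwin⟩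
  haveI hss : Subsingleton m.M := Fintype.card_le_one_iff_subsingleton.mp hcard
  set u0 : Fin 3 := nm 0 m.m0 with hu0
  have hedge0 : (Bgame n hn).edge 0 u0 := hval 0 m.m0 rfl
  have hu0ne : u0 ≠ 0 := by
    rcases hedge0 with ⟨-, h⟩ | ⟨-, hne⟩
    · exact h
    · exact absurd rfl hne
  set ρ : ℕ → Fin 3 := fun t => if t % 2 = 0 then 0 else u0 with hρ
  have hρeven : ∀ t, t % 2 = 0 → ρ t = 0 := fun t ht => by simp [hρ, ht]
  have hρodd : ∀ t, t % 2 = 1 → ρ t = u0 := fun t ht => by simp [hρ, ht]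
  have hplay : (Bgame n hn).IsPlay ρ := by
    refine ⟨hρeven 0 rfl, fun t => ?_⟩
    rcases Nat.mod_two_eq_zero_or_one t with h | h
    · rw [hρeven t h, hρodd (t + 1) (by omega)]
      exact hedge0
    · rw [hρodd t h, hρeven (t + 1) (by omega)]
      exact Or.inr ⟨rfl, hu0ne⟩
  have hconsρ : ∀ t, ρ t ∈ (Bgame n hn).EveV → ρ (t + 1) = nm (ρ t) (Mem.st m ρ t) := by
    intro t ht
    have ht0 : ρ t = 0 := ht
    have hteven : t % 2 = 0 := by
      by_contra h
      have h1 : t % 2 = 1 := by omega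
      rw [hρodd t h1] at ht0
      exact hu0ne ht0
    rw [hρodd (t + 1) (by omega), ht0, hu0]
    exact congrArg _ (Subsingleton.elim _ _)
  have hF : 1 < ((Bgame n hn).InfCol ρ).ncard := hwin ρ hplay hconsρ
  set e : Fin n := if u0 = 2 then ⟨1, by omega⟩ else ⟨0, by omega⟩ with he
  have hcol : ∀ t, (Bgame n hn).col (ρ t) (ρ (t + 1)) = some e := by
    intro t
    rcases Nat.mod_two_eq_zero_or_one t with h | h
    · rw [hρeven t h, hρodd (t + 1) (by omega)]
      show some (if (0 : Fin 3) = 2 ∨ u0 = 2 then _ else _) = some e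
      rw [he]
      by_cases h2 : u0 = 2
      · rw [if_pos (Or.inr h2), if_pos h2]
      · rw [if_neg (not_or.mpr ⟨by decide, h2⟩), if_neg h2]
    · rw [hρodd t h, hρeven (t + 1) (by omega)]
      show some (if u0 = 2 ∨ (0 : Fin 3) = 2 then _ else _) = some e
      rw [he]
      by_cases h2 : u0 = 2
      · rw [if_pos (Or.inl h2), if_pos h2]
      · rw [if_neg (not_or.mpr ⟨h2, by decide⟩), if_neg h2]
  have hsub : (Bgame n hn).InfCol ρ ⊆ {e} := by
    intro a ha
    obtain ⟨mm, -, hcm⟩ := ha 0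
    have := (hcol mm).symm.trans hcm
    exact (Option.some.inj this).symm
  have hle : ((Bgame n hn).InfCol ρ).ncard ≤ 1 :=
    le_trans (Set.ncard_le_ncard hsub (Set.finite_singleton e))
      (le_of_eq (Set.ncard_singleton e))
  omega

end Stmt16Aux
namespace Stmt16Aux
open Classical
set_option linter.unusedSectionVars false
set_option maxHeartbeats 1000000

lemma chain_desc {V : Type} (r : V → V → Prop) (f : V → ℕ)
    (hd : ∀ a b, r a b → f b < f a) :
    ∀ (L : List V) (v x : V), List.Chain r v L → L.getLast? = some x → f x < f v := by
  intro L
  induction L with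
  | nil => intro v x _ h; exact absurd h (by simp)
  | cons b rest ih =>
    intro v x hch hl
    simp only [List.Chain, List.chain_cons] at hch
    rcases rest with _ | ⟨c, t⟩
    · have hbx : b = x := by simpa using hl
      subst hbx
      exact hd v b hch.1
    · have := ih b x hch.2 (by simpa using hl)
      exact lt_trans this (hd v b hch.1)

/-! ### The `ε`-lower-bound game: the mode-nomination game -/

@[reducible] def Dgame (n : ℕ) (hn : 2 ≤ n) : Game (Fin n) where
  V := Sum (Fin n) (Sum Unit (Fin n))
  finV := inferInstance
  EveV := {Sum.inr (Sum.inl ())}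
  v0 := Sum.inl ⟨0, by omega⟩
  edge := fun v u =>
    (∃ c, v = Sum.inl c ∧ u = Sum.inr (Sum.inl ())) ∨
    (∃ j, v = Sum.inr (Sum.inl ()) ∧ u = Sum.inr (Sum.inr j)) ∨
    (∃ j c, v = Sum.inr (Sum.inr j) ∧ u = Sum.inl c ∧ c ≠ j)
  col := fun v u =>
    match v, u with
    | Sum.inl c, Sum.inr (Sum.inl _) => some c
    | _, _ => none
  exists_succ := by
    intro v
    rcases v with c | u
    · exact ⟨Sum.inr (Sum.inl ()), Or.inl ⟨c, rfl, rfl⟩⟩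
    · rcases u with u | j
      · cases u
        exact ⟨Sum.inr (Sum.inr ⟨0, by omega⟩), Or.inr (Or.inl ⟨⟨0, by omega⟩, rfl, rfl⟩)⟩
      · by_cases hj : j = ⟨0, by omega⟩
        · refine ⟨Sum.inl ⟨1, hn⟩, Or.inr (Or.inr ⟨j, ⟨1, hn⟩, rfl, rfl, ?_⟩)⟩
          rw [hj]
          intro h
          rw [Fin.mk.injEq] at h
          omega
        · exact ⟨Sum.inl ⟨0, by omega⟩, Or.inr (Or.inr ⟨j, ⟨0, by omega⟩, rfl, rfl,
            fun h => hj h.symm⟩)⟩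
  no_eps_cycle := by
    rintro ⟨v, l, hch⟩
    have hd : ∀ a b : Sum (Fin n) (Sum Unit (Fin n)),
        (((∃ c, a = Sum.inl c ∧ b = Sum.inr (Sum.inl ())) ∨
          (∃ j, a = Sum.inr (Sum.inl ()) ∧ b = Sum.inr (Sum.inr j)) ∨
          (∃ j c, a = Sum.inr (Sum.inr j) ∧ b = Sum.inl c ∧ c ≠ j)) ∧
         (match a, b with
           | Sum.inl c, Sum.inr (Sum.inl _) => some c
           | _, _ => (none : Option (Fin n))) = none) →
        (match b with
          | Sum.inl _ => (0:ℕ)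
          | Sum.inr (Sum.inl _) => 2
          | Sum.inr (Sum.inr _) => 1) <
        (match a with
          | Sum.inl _ => (0:ℕ)
          | Sum.inr (Sum.inl _) => 2
          | Sum.inr (Sum.inr _) => 1) := by
      rintro a b ⟨he, hc⟩
      rcases he with ⟨c, rfl, rfl⟩ | ⟨j, rfl, rfl⟩ | ⟨j, c, rfl, rfl, -⟩
      · exact absurd hc (fun h => nomatch h)
      · norm_num
      · norm_num
    have key := chain_desc _ _ hd (l ++ [v]) v v hch List.getLast?_concat
    omega

variable (n : ℕ) (hn : 2 ≤ n)

lemma Dinv1 {c : Fin n} {u : (Dgame n hn).V} (h : (Dgame n hn).edge (Sum.inl c) u) :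
    u = Sum.inr (Sum.inl ()) := by
  rcases h with ⟨c', -, hu⟩ | ⟨j, hv, -⟩ | ⟨j, c', hv, -, -⟩
  · exact hu
  · exact absurd hv (by exact fun h => nomatch h)
  · exact absurd hv (by exact fun h => nomatch h)

lemma Dinv2 {u : (Dgame n hn).V} (h : (Dgame n hn).edge (Sum.inr (Sum.inl ())) u) :
    ∃ j, u = Sum.inr (Sum.inr j) := by
  rcases h with ⟨c', hv, -⟩ | ⟨j, -, hu⟩ | ⟨j, c', hv, -, -⟩
  · exact absurd hv (by exact fun h => nomatch h)
  · exact ⟨j, hu⟩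
  · exact absurd hv (by
      intro hh
      exact nomatch hh)

lemma Dinv3 {j : Fin n} {u : (Dgame n hn).V}
    (h : (Dgame n hn).edge (Sum.inr (Sum.inr j)) u) :
    ∃ c, c ≠ j ∧ u = Sum.inl c := by
  rcases h with ⟨c', hv, -⟩ | ⟨j', hv, -⟩ | ⟨j', c', hv, hu, hne⟩
  · exact absurd hv (by exact fun h => nomatch h)
  · exact absurd hv (by
      intro hh
      exact nomatch hh)
  · have hj : j = j' := Sum.inr.inj (Sum.inr.inj hv)
    exact ⟨c', by rw [hj]; exact hne, hu⟩

lemma Dcol_some {v u : (Dgame n hn).V} {a : Fin n}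
    (h : (Dgame n hn).col v u = some a) : v = Sum.inl a := by
  rcases v with c | w
  · rcases u with c' | w'
    · exact absurd h (by exact fun hh => nomatch hh)
    · rcases w' with x | j
      · have h' : some c = some a := h
        rw [Option.some.inj h']
      · exact absurd h (by exact fun hh => nomatch hh)
  · rcases w with x | j
    · rcases u with c' | w'
      · exact absurd h (by exact fun hh => nomatch hh)
      · rcases w' with x' | j'
        · exact absurd h (by exact fun hh => nomatch hh)
        · exact absurd h (by exact fun hh => nomatch hh)
    · rcases u with c' | w'
      · exact absurd h (by exact fun hh => nomatch hh)
      · rcases w' with x' | j'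
        · exact absurd h (by exact fun hh => nomatch hh)
        · exact absurd h (by exact fun hh => nomatch hh)

def strD (l : List (Sum (Fin n) (Sum Unit (Fin n)))) : Fin n :=
  match l.getLast? with
  | some (Sum.inl c) => c
  | _ => ⟨0, by omega⟩

lemma strD_eq (l : List (Sum (Fin n) (Sum Unit (Fin n)))) (c : Fin n)
    (hl : l.getLast? = some (Sum.inl c)) : strD n hn l = c := by
  simp only [strD, hl]

theorem Dgame_wins : (Dgame n hn).WinsEve (FC (Fin n)) := by
  refine ⟨fun h _ => Sum.inr (Sum.inr (strD n hn h)),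
    fun h v hv => Or.inr (Or.inl ⟨strD n hn h, hv, rfl⟩), ?_⟩
  intro ρ hplay hcons
  have hstep : ∀ t c, ρ t = Sum.inl c →
      (Dgame n hn).col (ρ t) (ρ (t + 1)) = some c ∧
      ∃ c', c' ≠ c ∧ ρ (t + 3) = Sum.inl c' := by
    intro t c htc
    have h1 : ρ (t + 1) = Sum.inr (Sum.inl ()) := Dinv1 n hn (htc ▸ hplay.2 t)
    have hE : ρ (t + 1) ∈ (Dgame n hn).EveV := by rw [h1]; exact rfl
    have h2 := hcons (t + 1) hE
    have hl : ((Dgame n hn).hist ρ (t + 1)).getLast? = some (Sum.inl c) := by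
      rw [hist_getLast, htc]
    have h2' : ρ (t + 2) = Sum.inr (Sum.inr c) := by
      rw [h2]
      show Sum.inr (Sum.inr (strD n hn ((Dgame n hn).hist ρ (t + 1)))) = _
      rw [strD_eq n hn _ c hl]
    obtain ⟨c', hne, h3⟩ := Dinv3 n hn (h2' ▸ hplay.2 (t + 2))
    refine ⟨?_, c', hne, h3⟩
    rw [htc, h1]
  have hmode : ∀ k, ∃ c, ρ (3 * k) = Sum.inl c := by
    intro k
    induction k with
    | zero => exact ⟨⟨0, by omega⟩, hplay.1⟩
    | succ k ih =>
      obtain ⟨c, hc⟩ := ih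
      obtain ⟨c', hne, h3⟩ := (hstep (3 * k) c hc).2
      refine ⟨c', ?_⟩
      have e : 3 * (k + 1) = 3 * k + 3 := by ring
      rw [e]
      exact h3
  choose μ hμ using hmode
  obtain ⟨d, hd⟩ := infCol_nonempty (Dgame n hn) ρ hplay.2
  have hsecond : ∀ N, ∃ m, N ≤ m ∧
      ∃ a, (Dgame n hn).col (ρ m) (ρ (m + 1)) = some a ∧ a ∈ {a : Fin n | a ≠ d} := by
    intro N
    obtain ⟨m, hm, hcm⟩ := hd N
    have hmd : ρ m = Sum.inl d := Dcol_some n hn hcm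
    obtain ⟨c', hne, h3⟩ := (hstep m d hmd).2
    exact ⟨m + 3, by omega, c', (hstep (m + 3) c' h3).1, hne⟩
  obtain ⟨a, haC, ha⟩ := pigeon (fun m => (Dgame n hn).col (ρ m) (ρ (m + 1)))
    {a : Fin n | a ≠ d} hsecond
  exact (Set.one_lt_ncard (Set.toFinite _)).mpr ⟨a, ha, d, hd, haC⟩

theorem Dgame_small (m : Mem (Dgame n hn))
    (hcard : Fintype.card m.M < n) : ¬ m.SetsWinning (FC (Fin n)) := by
  rintro ⟨nm, hval, hwin⟩
  have hnmx : ∀ x : m.M, ∃ j, nm (Sum.inr (Sum.inl ())) x = Sum.inr (Sum.inr j) :=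
    fun x => Dinv2 n hn (hval _ x rfl)
  choose N hN using hnmx
  have hcsx : ∃ cs : Fin n, ∀ x, N x ≠ cs := by
    by_contra h
    push_neg at h
    have hsurj : Function.Surjective N := fun c => h c
    have hle := Fintype.card_le_of_surjective N hsurj
    simp only [Fintype.card_fin] at hle
    omega
  obtain ⟨cs, hcs⟩ := hcsx
  set next : (Dgame n hn).V → m.M → (Dgame n hn).V := fun v x =>
    match v with
    | Sum.inl _ => Sum.inr (Sum.inl ())
    | Sum.inr (Sum.inl _) => nm (Sum.inr (Sum.inl ())) x
    | Sum.inr (Sum.inr _) => Sum.inl cs with hnext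
  set aux : ℕ → (Dgame n hn).V × m.M := fun t =>
    Nat.rec ((Dgame n hn).v0, m.m0)
      (fun _ p => (next p.1 p.2, m.upd p.2 (p.1, next p.1 p.2))) t with haux
  set ρ : ℕ → (Dgame n hn).V := fun t => (aux t).1 with hρ
  have hρs : ∀ t, ρ (t + 1) = next (ρ t) (aux t).2 := fun t => rfl
  have hst : ∀ t, Mem.st m ρ t = (aux t).2 := by
    intro t
    induction t with
    | zero => rfl
    | succ k ih =>
      show m.upd (Mem.st m ρ k) (ρ k, ρ (k + 1)) = _
      rw [ih]
  have hWshape : ∀ t j, ρ t = Sum.inr (Sum.inr j) → ∃ x, N x = j := by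
    intro t
    cases t with
    | zero =>
      intro j h
      exact nomatch h
    | succ k =>
      intro j h
      rw [hρs k] at h
      rcases hρk : ρ k with c | u
      · rw [hρk] at h
        exact nomatch h
      · rcases u with u | j'
        · rw [hρk] at h
          have h' : nm (Sum.inr (Sum.inl ())) (aux k).2 = Sum.inr (Sum.inr j) := h
          rw [hN (aux k).2] at h'
          exact ⟨(aux k).2, Sum.inr.inj (Sum.inr.inj h')⟩
        · rw [hρk] at h
          exact nomatch h
  have hplay : (Dgame n hn).IsPlay ρ := by
    refine ⟨rfl, fun t => ?_⟩
    rw [hρs t]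
    rcases hρt : ρ t with c | u
    · exact Or.inl ⟨c, rfl, rfl⟩
    · rcases u with u | j
      · cases u
        exact hval _ _ rfl
      · obtain ⟨x, hx⟩ := hWshape t j hρt
        exact Or.inr (Or.inr ⟨j, cs, rfl, rfl, fun hh => hcs x (hx.trans hh.symm)⟩)
  have hcons : ∀ t, ρ t ∈ (Dgame n hn).EveV → ρ (t + 1) = nm (ρ t) (Mem.st m ρ t) := by
    intro t ht
    have hx : ρ t = Sum.inr (Sum.inl ()) := ht
    rw [hρs t, hst t, hx]
  have hF : 1 < ((Dgame n hn).InfCol ρ).ncard := hwin ρ hplay hcons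
  have hsub : (Dgame n hn).InfCol ρ ⊆ {cs} := by
    intro a ha
    obtain ⟨mm, hmm, hcm⟩ := ha 1
    have hma : ρ mm = Sum.inl a := Dcol_some n hn hcm
    obtain ⟨k, rfl⟩ : ∃ k, mm = k + 1 := ⟨mm - 1, by omega⟩
    rw [hρs k] at hma
    rcases hρk : ρ k with c | u
    · rw [hρk] at hma
      exact nomatch hma
    · rcases u with u | j
      · rw [hρk] at hma
        have hma' : nm (Sum.inr (Sum.inl ())) (aux k).2 = Sum.inl a := hma
        rw [hN (aux k).2] at hma'
        exact absurd hma' (by exact fun hh => nomatch hh)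
      · rw [hρk] at hma
        exact (Sum.inl.inj hma).symm
  have hle : ((Dgame n hn).InfCol ρ).ncard ≤ 1 :=
    le_trans (Set.ncard_le_ncard hsub (Set.finite_singleton cs))
      (le_of_eq (Set.ncard_singleton cs))
  omega

end Stmt16Aux
/-- For the Muller condition `F_n = {A ⊆ {1,…,n} : |A| > 1}`, the general
memory requirements are `2` over `ε`-free games but `n` over games with
`ε`-transitions. -/
theorem stmt16 (n : ℕ) (hn : 2 ≤ n) :
    memGenEf {A : Set (Fin n) | 1 < A.ncard} = 2 ∧
    memGen {A : Set (Fin n) | 1 < A.ncard} = n := by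
  haveI : Inhabited (Fin n) := ⟨⟨0, by omega⟩⟩
  constructor
  · have hmem2 : 2 ∈ {k | ∀ G : Game (Fin n), G.EpsFree →
        G.WinsEve {A : Set (Fin n) | 1 < A.ncard} →
        ∃ m : Mem G, Fintype.card m.M = k ∧
          m.SetsWinning {A : Set (Fin n) | 1 < A.ncard}} := by
      intro G hef hwin
      exact Stmt16Aux.upper_ef G hef hwin
    refine le_antisymm (Nat.sInf_le hmem2) (le_csInf ⟨2, hmem2⟩ ?_)
    intro k hk
    by_contra hlt
    push_neg at hlt
    obtain ⟨mm, hcard, hsw⟩ := hk (Stmt16Aux.Bgame n hn)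
      (Stmt16Aux.Bgame_epsfree n hn) (Stmt16Aux.Bgame_wins n hn)
    exact Stmt16Aux.Bgame_no_small n hn mm (by omega) hsw
  · have hmemn : n ∈ {k | ∀ G : Game (Fin n),
        G.WinsEve {A : Set (Fin n) | 1 < A.ncard} →
        ∃ m : Mem G, Fintype.card m.M = k ∧
          m.SetsWinning {A : Set (Fin n) | 1 < A.ncard}} := by
      intro G hwin
      obtain ⟨m, hc, hs⟩ := Stmt16Aux.upper_gen G hwin
      exact ⟨m, by rw [hc]; exact Fintype.card_fin n, hs⟩
    refine le_antisymm (Nat.sInf_le hmemn) (le_csInf ⟨n, hmemn⟩ ?_)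
    intro k hk
    by_contra hlt
    push_neg at hlt
    obtain ⟨mm, hcard, hsw⟩ := hk (Stmt16Aux.Dgame n hn) (Stmt16Aux.Dgame_wins n hn)
    exact Stmt16Aux.Dgame_small n hn mm (by omega) hsw
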